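/- arXiv:1907.02743 — 5 statements merged into one kernel-verified Lean document; each statement's English description precedes it below -/
import Mathlib

section
/- Let G be a finite simple graph on vertices x1,...,xn with edge ideal I(G) in the polynomial ring S = K[x1,...,xn], and let T be a triangle of G with vertex set {x1,x2,x3} such that x3 has degree 2 in G. Then for every integer s ≥ 2, the colon ideal (I(G)^(s) : x1·x2·x3) equals I(G)^(s-2), where I^(s) denotes the s-th symbolic power. -/
open MvPolynomial

namespace CW

variable {V : Type*}

/-- A vertex cover of a graph: a set of vertices meeting every edge. -/
def IsVertexCover (G : SimpleGraph V) (C : Set V) : Prop :=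
  ∀ ⦃v w : V⦄, G.Adj v w → v ∈ C ∨ w ∈ C

/-- A minimal vertex cover: no proper subset is a vertex cover. -/
def IsMinimalVertexCover (G : SimpleGraph V) (C : Set V) : Prop :=
  IsVertexCover G C ∧ ∀ D : Set V, D ⊂ C → ¬ IsVertexCover G D

/-- The edge ideal of a graph, in the polynomial ring over `K` with variables the vertices. -/
noncomputable def edgeIdeal (K : Type*) [Field K] (G : SimpleGraph V) : Ideal (MvPolynomial V K) :=
  Ideal.span {m | ∃ v w : V, G.Adj v w ∧ m = X v * X w}

/-- The monomial prime ideal generated by the variables in `C`. -/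
noncomputable def coverIdeal (K : Type*) [Field K] (C : Set V) : Ideal (MvPolynomial V K) :=
  Ideal.span ((fun v => (X v : MvPolynomial V K)) '' C)

/-- The `s`-th symbolic power of the edge ideal:
the intersection of the `s`-th powers of the minimal-vertex-cover primes. -/
noncomputable def symbolicPower (K : Type*) [Field K] (G : SimpleGraph V) (s : ℕ) :
    Ideal (MvPolynomial V K) :=
  ⨅ C ∈ {C : Set V | IsMinimalVertexCover G C}, (coverIdeal K C) ^ s

/-- A matching: a set of edges of `G`, pairwise sharing no vertex. -/
def IsMatching (G : SimpleGraph V) (M : Finset (Sym2 V)) : Prop :=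
  (∀ e ∈ M, e ∈ G.edgeSet) ∧
    ∀ e ∈ M, ∀ f ∈ M, e ≠ f → ∀ v : V, v ∈ e → v ∉ f

/-- An induced matching: a matching such that no edge of `G` outside it is contained
in the union of two of its edges. -/
def IsInducedMatching (G : SimpleGraph V) (M : Finset (Sym2 V)) : Prop :=
  IsMatching G M ∧
    ∀ f ∈ G.edgeSet, f ∉ M → ∀ e₁ ∈ M, ∀ e₂ ∈ M,
      ¬ (∀ v : V, v ∈ f → v ∈ e₁ ∨ v ∈ e₂)

/-- The matching number: the maximum size of a matching. -/
noncomputable def matchNum (G : SimpleGraph V) : ℕ :=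
  sSup {k : ℕ | ∃ M : Finset (Sym2 V), IsMatching G M ∧ M.card = k}

/-- The induced matching number: the maximum size of an induced matching. -/
noncomputable def indMatchNum (G : SimpleGraph V) : ℕ :=
  sSup {k : ℕ | ∃ M : Finset (Sym2 V), IsInducedMatching G M ∧ M.card = k}

/-- A Cameron–Walker graph: the matching number equals the induced matching number. -/
def IsCameronWalker (G : SimpleGraph V) : Prop :=
  matchNum G = indMatchNum G

/-- The graph obtained by deleting the vertices in `U`: it keeps the vertex set but
only the edges avoiding `U` (isolated vertices are irrelevant for all notions used). -/
def deleteVerts (G : SimpleGraph V) (U : Set V) : SimpleGraph V where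
  Adj v w := G.Adj v w ∧ v ∉ U ∧ w ∉ U
  symm := ⟨fun _ _ h => ⟨h.1.symm, h.2.2, h.2.1⟩⟩
  loopless := ⟨fun u h => G.loopless.irrefl u h.1⟩

end CW

open MvPolynomial

namespace CWAux

open scoped Classical

variable {V : Type*} {K : Type*} [Field K]

/-- weight of an exponent vector: total degree in the variables of `C`. -/
noncomputable def wC [Fintype V] (C : Set V) (m : V →₀ ℕ) : ℕ :=
  ∑ v : V, if v ∈ C then m v else 0

variable [Fintype V]

lemma wC_add (C : Set V) (m n : V →₀ ℕ) : wC C (m + n) = wC C m + wC C n := by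
  simp only [wC, Finsupp.add_apply, ← Finset.sum_add_distrib]
  refine Finset.sum_congr rfl fun v _ => ?_
  split <;> simp

lemma wC_single (C : Set V) (v : V) : wC C (Finsupp.single v 1) = if v ∈ C then 1 else 0 := by
  simp only [wC, Finsupp.single_apply]
  rw [Finset.sum_eq_single v]
  · simp
  · intro b _ hb; simp [Ne.symm hb]
  · simp

lemma mem_coverIdeal_weight {C : Set V} {f : MvPolynomial V K}
    (hf : f ∈ CW.coverIdeal K C) : ∀ m ∈ f.support, 1 ≤ wC C m := by
  refine Submodule.span_induction ?_ ?_ ?_ ?_ hf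
  · rintro x ⟨v, hv, rfl⟩ m hm
    rw [support_X] at hm
    simp only [Finset.mem_singleton] at hm
    subst hm
    rw [wC_single]; simp [hv]
  · simp
  · intro x y _ _ hx hy m hm
    rcases Finset.mem_union.1 (Finsupp.support_add hm) with h | h
    · exact hx m h
    · exact hy m h
  · intro r x _ hx m hm
    rw [smul_eq_mul] at hm
    rcases Finset.mem_add.1 (MvPolynomial.support_mul r x hm) with ⟨m1, hm1, m2, hm2, rfl⟩
    have := hx m2 hm2
    rw [wC_add]; omega

lemma mem_pow_weight {C : Set V} {s : ℕ} {f : MvPolynomial V K}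
    (hf : f ∈ CW.coverIdeal K C ^ s) : ∀ m ∈ f.support, s ≤ wC C m := by
  induction s generalizing f with
  | zero => intro m hm; omega
  | succ n ih =>
    rw [pow_succ'] at hf
    refine Submodule.mul_induction_on hf ?_ ?_
    · intro a ha b hb m hm
      rcases Finset.mem_add.1 (MvPolynomial.support_mul a b hm) with ⟨m1, hm1, m2, hm2, rfl⟩
      have h1 := mem_coverIdeal_weight ha m1 hm1
      have h2 := ih hb m2 hm2
      rw [wC_add]; omega
    · intro x y hx hy m hm
      rcases Finset.mem_union.1 (Finsupp.support_add hm) with h | h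
      · exact hx m h
      · exact hy m h

lemma monomial_mem_pow {C : Set V} {s : ℕ} {m : V →₀ ℕ} (r : K) (h : s ≤ wC C m) :
    (monomial m r : MvPolynomial V K) ∈ CW.coverIdeal K C ^ s := by
  induction s generalizing m with
  | zero => simp
  | succ n ih =>
    have hpos : ∃ v : V, v ∈ C ∧ m v ≠ 0 := by
      by_contra hc
      push_neg at hc
      have : wC C m = 0 := Finset.sum_eq_zero (by
        intro v _
        split
        · exact hc v ‹_›
        · rfl)
      omega
    obtain ⟨v, hv, hmv⟩ := hpos
    set m' : V →₀ ℕ := m - Finsupp.single v 1 with hm'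
    have hsum : Finsupp.single v 1 + m' = m := by
      ext w
      simp only [Finsupp.add_apply, hm', Finsupp.tsub_apply, Finsupp.single_apply]
      by_cases hw : v = w
      · subst hw; simp; omega
      · simp [hw]
    have hw' : n ≤ wC C m' := by
      have := wC_add C (Finsupp.single v 1) m'
      rw [hsum, wC_single] at this
      simp [hv] at this
      omega
    have : (monomial m r : MvPolynomial V K) = X v * monomial m' r := by
      rw [X, monomial_mul, one_mul, hsum]
    rw [this, pow_succ']
    exact Ideal.mul_mem_mul (Ideal.subset_span ⟨v, hv, rfl⟩) (ih hw')

lemma mem_pow_iff_weight (C : Set V) (s : ℕ) (f : MvPolynomial V K) :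
    f ∈ CW.coverIdeal K C ^ s ↔ ∀ m ∈ f.support, s ≤ wC C m := by
  refine ⟨mem_pow_weight, fun h => ?_⟩
  rw [as_sum f]
  exact Ideal.sum_mem _ fun m hm => monomial_mem_pow _ (h m hm)

end CWAux



/-- If `T = {x1, x2, x3}` is a triangle of `G` and `x3` has degree 2 in `G`, then for
every `s ≥ 2` we have `(I(G)^(s) : x1·x2·x3) = I(G)^(s-2)`. -/
theorem stmt_1 {V : Type*} [Fintype V] [DecidableEq V] (K : Type*) [Field K]
    (G : SimpleGraph V) [DecidableRel G.Adj] (x1 x2 x3 : V)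
    (h12 : G.Adj x1 x2) (h13 : G.Adj x1 x3) (h23 : G.Adj x2 x3)
    (hdeg : G.degree x3 = 2) (s : ℕ) (hs : 2 ≤ s) :
    (CW.symbolicPower K G s).colon
        (Ideal.span {(X x1 : MvPolynomial V K) * X x2 * X x3})
      = CW.symbolicPower K G (s - 2) := by
  classical
  -- neighbors of x3 are exactly x1 and x2
  have hnb : ∀ u, G.Adj x3 u → u = x1 ∨ u = x2 := by
    have hsub : ({x1, x2} : Finset V) ⊆ G.neighborFinset x3 := by
      intro u hu
      rcases Finset.mem_insert.1 hu with rfl | hu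
      · exact (SimpleGraph.mem_neighborFinset _ _ _).2 h13.symm
      · rw [Finset.mem_singleton] at hu
        subst hu
        exact (SimpleGraph.mem_neighborFinset _ _ _).2 h23.symm
    have hcard : ({x1, x2} : Finset V).card = 2 := by
      rw [Finset.card_insert_of_notMem (by simp [h12.ne]), Finset.card_singleton]
    have heq : ({x1, x2} : Finset V) = G.neighborFinset x3 := by
      refine Finset.eq_of_subset_of_card_le hsub ?_
      rw [hcard, SimpleGraph.card_neighborFinset_eq_degree, hdeg]
    intro u hu
    have : u ∈ ({x1, x2} : Finset V) := by
      rw [heq]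
      exact (SimpleGraph.mem_neighborFinset _ _ _).2 hu
    simpa using this
  have hcnt : ∀ C : Set V, CW.IsMinimalVertexCover G C →
      (if x1 ∈ C then 1 else 0) + (if x2 ∈ C then 1 else 0) + (if x3 ∈ C then 1 else 0) = 2 := by
    intro C hC
    have c12 := hC.1 h12
    have c13 := hC.1 h13
    have c23 := hC.1 h23
    have hnotall : ¬(x1 ∈ C ∧ x2 ∈ C ∧ x3 ∈ C) := by
      rintro ⟨m1, m2, m3⟩
      refine hC.2 (C \ {x3}) ?_ ?_
      · exact ⟨Set.diff_subset, fun hsub => (hsub m3).2 rfl⟩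
      · intro v w hvw
        by_cases hv : v = x3
        · subst hv
          rcases hnb w hvw with rfl | rfl
          · exact Or.inr ⟨m1, by simp [h13.ne]⟩
          · exact Or.inr ⟨m2, by simp [h23.ne]⟩
        · by_cases hw : w = x3
          · subst hw
            rcases hnb v hvw.symm with rfl | rfl
            · exact Or.inl ⟨m1, by simp [h13.ne]⟩
            · exact Or.inl ⟨m2, by simp [h23.ne]⟩
          · rcases hC.1 hvw with h | h
            · exact Or.inl ⟨h, by simp [hv]⟩
            · exact Or.inr ⟨h, by simp [hw]⟩
    by_cases hx1 : x1 ∈ C <;> by_cases hx2 : x2 ∈ C <;> by_cases hx3 : x3 ∈ C <;>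
      simp [hx1, hx2, hx3] at *
  ext g
  rw [Ideal.mem_colon_span_singleton]
  simp only [CW.symbolicPower, Ideal.mem_iInf, Set.mem_setOf_eq]
  refine forall_congr' fun C => forall_congr' fun hC => ?_
  have hkey : ∀ m : V →₀ ℕ,
      CWAux.wC C (m + Finsupp.single x1 1 + Finsupp.single x2 1 + Finsupp.single x3 1) =
        CWAux.wC C m + 2 := by
    intro m
    rw [CWAux.wC_add, CWAux.wC_add, CWAux.wC_add, CWAux.wC_single, CWAux.wC_single,
      CWAux.wC_single]
    have := hcnt C hC
    omega
  rw [CWAux.mem_pow_iff_weight, CWAux.mem_pow_iff_weight]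
  have hprod : g * (X x1 * X x2 * X x3) = ((g * X x1) * X x2) * X x3 := by ring
  rw [hprod]
  simp only [support_mul_X]
  constructor
  · intro h m hm
    have hmem := Finset.mem_map_of_mem (addRightEmbedding (Finsupp.single x3 1))
      (Finset.mem_map_of_mem (addRightEmbedding (Finsupp.single x2 1))
        (Finset.mem_map_of_mem (addRightEmbedding (Finsupp.single x1 1)) hm))
    simp only [addRightEmbedding_apply] at hmem
    have := h _ hmem
    rw [hkey] at this
    omega
  · intro h m hm
    simp only [Finset.mem_map, addRightEmbedding_apply] at hm
    obtain ⟨m1, ⟨m2, ⟨m3, hm3, rfl⟩, rfl⟩, rfl⟩ := hm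
    rw [hkey]
    have := h m3 hm3
    omega
end

section
/- Let G be a finite simple graph and x a vertex of G belonging to some triangle T = {x, x2, x3} where both x2 and x3 have degree 2 in G, and suppose G arises from a connected bipartite graph H with parts X ∪ Y by attaching at least one pendant edge to each vertex of X and pendant triangles to vertices of Y (a non-star, non-star-triangle connected Cameron-Walker graph). Then the induced matching number of G minus x equals the induced matching number of G: indmatch(G \ x) = indmatch(G), where x is the vertex of the pendant triangle T with degree greater than 2. -/
open MvPolynomial

section Aux

variable {V : Type*} [Fintype V] [DecidableEq V]

private lemma cw_empty_indmatch (H : SimpleGraph V) :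
    CW.IsInducedMatching H (∅ : Finset (Sym2 V)) := by
  refine ⟨⟨?_, ?_⟩, ?_⟩
  · intro e he; exact absurd he (Finset.notMem_empty e)
  · intro e he; exact absurd he (Finset.notMem_empty e)
  · intro f _ _ e₁ he₁; exact absurd he₁ (Finset.notMem_empty e₁)

private lemma cw_bdd (H : SimpleGraph V) :
    BddAbove {k : ℕ | ∃ M : Finset (Sym2 V), CW.IsInducedMatching H M ∧ M.card = k} := by
  refine ⟨Fintype.card (Sym2 V), ?_⟩
  rintro k ⟨M, _, rfl⟩
  exact Finset.card_le_univ M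

end Aux

/-- Let `G` be a connected graph obtained from a connected bipartite graph `H` on parts
`X ∪ Y` by attaching at least one pendant edge to each vertex of `X` and pendant
triangles to vertices of `Y` (a non-star, non-star-triangle connected Cameron–Walker
graph), and let `x` be the vertex of degree `> 2` of a pendant triangle
`T = {x, x2, x3}` (so `deg(x2) = deg(x3) = 2`). Then `indmatch(G \ x) = indmatch(G)`. -/
theorem stmt_8 {V : Type*} [Fintype V] [DecidableEq V] (G : SimpleGraph V)
    [DecidableRel G.Adj] (hconn : G.Connected)
    (x x2 x3 : V)
    (hT12 : G.Adj x x2) (hT13 : G.Adj x x3) (hT23 : G.Adj x2 x3)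
    (hd2 : G.degree x2 = 2) (hd3 : G.degree x3 = 2) (hdx : 2 < G.degree x)
    (X Y : Set V) (hdisj : X ∩ Y = ∅)
    (hXX : ∀ v ∈ X, ∀ w ∈ X, ¬ G.Adj v w)
    (hYY : ∀ v ∈ Y, ∀ w ∈ Y, ¬ G.Adj v w)
    (hHconn : (G.induce (X ∪ Y)).Connected)
    (hpend : ∀ v ∈ X, ∃ u : V, G.Adj v u ∧ G.degree u = 1)
    (hout : ∀ u : V, u ∉ X ∪ Y →
      (G.degree u = 1 ∧ ∃ v ∈ X, G.Adj u v) ∨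
        (G.degree u = 2 ∧ ∃ w : V, w ∉ X ∪ Y ∧ G.degree w = 2 ∧
          ∃ y ∈ Y, G.Adj u w ∧ G.Adj u y ∧ G.Adj w y)) :
    CW.indMatchNum (CW.deleteVerts G {x}) = CW.indMatchNum G := by
  classical
  set G' := CW.deleteVerts G {x} with hG'
  have hxx2 : x ≠ x2 := hT12.ne
  have hxx3 : x ≠ x3 := hT13.ne
  have hx23 : x2 ≠ x3 := hT23.ne
  have hsplit : ∀ f : Sym2 V, ∃ a b, f = s(a, b) :=
    fun f => Sym2.ind (fun a b => ⟨a, b, rfl⟩) f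
  -- neighbor characterization for degree-2 vertices
  have hnbr : ∀ (a b c : V), G.Adj a b → G.Adj a c → b ≠ c → G.degree a = 2 →
      ∀ w, G.Adj a w → w = b ∨ w = c := by
    intro a b c hab hac hbc hdeg w hw
    have hsub : ({b, c} : Finset V) ⊆ G.neighborFinset a := by
      intro v hv
      rcases Finset.mem_insert.mp hv with rfl | hv
      · exact (SimpleGraph.mem_neighborFinset G a v).mpr hab
      · rcases Finset.mem_singleton.mp hv with rfl
        exact (SimpleGraph.mem_neighborFinset G a v).mpr hac
    have hcard : ({b, c} : Finset V).card = 2 := by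
      rw [Finset.card_insert_of_notMem (by simpa using hbc), Finset.card_singleton]
    have heq : ({b, c} : Finset V) = G.neighborFinset a := by
      apply Finset.eq_of_subset_of_card_le hsub
      have hde : (G.neighborFinset a).card = 2 := hdeg
      rw [hcard, hde]
    have hmem : w ∈ ({b, c} : Finset V) := by
      rw [heq]; exact (SimpleGraph.mem_neighborFinset G a w).mpr hw
    simpa using hmem
  have hnbr2 : ∀ w, G.Adj x2 w → w = x ∨ w = x3 :=
    hnbr x2 x x3 hT12.symm hT23 hxx3 hd2
  have hnbr3 : ∀ w, G.Adj x3 w → w = x ∨ w = x2 :=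
    hnbr x3 x x2 hT13.symm hT23.symm hxx2 hd3
  -- adjacency / edge characterizations for G'
  have hG'adj : ∀ a b : V, G'.Adj a b ↔ G.Adj a b ∧ a ≠ x ∧ b ≠ x := by
    intro a b
    constructor
    · rintro ⟨h, ha, hb⟩; exact ⟨h, by simpa using ha, by simpa using hb⟩
    · rintro ⟨h, ha, hb⟩; exact ⟨h, by simpa using ha, by simpa using hb⟩
  have hG'edge : ∀ a b : V, s(a, b) ∈ G'.edgeSet ↔ G.Adj a b ∧ a ≠ x ∧ b ≠ x := by
    intro a b; rw [SimpleGraph.mem_edgeSet]; exact hG'adj a b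
  have hG'avoid : ∀ f ∈ G'.edgeSet, x ∉ f := by
    intro f hf
    obtain ⟨a, b, rfl⟩ := hsplit f
    obtain ⟨_, ha, hb⟩ := (hG'edge a b).mp hf
    rw [Sym2.mem_iff]
    push_neg
    exact ⟨ha.symm, hb.symm⟩
  have hG'sub : ∀ f ∈ G'.edgeSet, f ∈ G.edgeSet := by
    intro f hf
    obtain ⟨a, b, rfl⟩ := hsplit f
    exact (SimpleGraph.mem_edgeSet G).mpr ((hG'edge a b).mp hf).1
  -- transfer: induced matchings of G' are induced matchings of G
  have transfer1 : ∀ M : Finset (Sym2 V),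
      CW.IsInducedMatching G' M → CW.IsInducedMatching G M := by
    rintro M ⟨⟨hMe, hMm⟩, hMi⟩
    refine ⟨⟨fun e he => hG'sub e (hMe e he), hMm⟩, ?_⟩
    intro f hf hfM e₁ he₁ e₂ he₂ hall
    obtain ⟨a, b, rfl⟩ := hsplit f
    have hab : G.Adj a b := (SimpleGraph.mem_edgeSet G).mp hf
    have key : ∀ c : V, c ∈ s(a, b) → c ≠ x := by
      intro c hc hcx
      rcases hall c hc with h1 | h1
      · exact hG'avoid e₁ (hMe e₁ he₁) (hcx ▸ h1)
      · exact hG'avoid e₂ (hMe e₂ he₂) (hcx ▸ h1)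
    have hfG' : s(a, b) ∈ G'.edgeSet :=
      (hG'edge a b).mpr ⟨hab, key a (Sym2.mem_iff.mpr (Or.inl rfl)),
        key b (Sym2.mem_iff.mpr (Or.inr rfl))⟩
    exact hMi _ hfG' hfM e₁ he₁ e₂ he₂ hall
  -- transfer: induced matchings of G yield equally large ones of G'
  have transfer2 : ∀ M : Finset (Sym2 V), CW.IsInducedMatching G M →
      ∃ M' : Finset (Sym2 V), CW.IsInducedMatching G' M' ∧ M'.card = M.card := by
    rintro M ⟨⟨hMe, hMm⟩, hMi⟩
    by_cases hx : ∃ e ∈ M, x ∈ e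
    case neg =>
      push_neg at hx
      refine ⟨M, ⟨⟨?_, hMm⟩, ?_⟩, rfl⟩
      · intro e he
        obtain ⟨a, b, rfl⟩ := hsplit e
        have hab := (SimpleGraph.mem_edgeSet G).mp (hMe _ he)
        have hxa : a ≠ x := fun h => hx _ he (Sym2.mem_iff.mpr (Or.inl h.symm))
        have hxb : b ≠ x := fun h => hx _ he (Sym2.mem_iff.mpr (Or.inr h.symm))
        exact (hG'edge a b).mpr ⟨hab, hxa, hxb⟩
      · intro f hf hfM e₁ he₁ e₂ he₂
        exact hMi f (hG'sub f hf) hfM e₁ he₁ e₂ he₂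
    case pos =>
      obtain ⟨e, heM, hxe⟩ := hx
      have hxonly : ∀ f ∈ M, x ∈ f → f = e := by
        intro f hf hxf
        by_contra hne
        exact hMm f hf e heM hne x hxf hxe
      have hxfree : ∀ f ∈ M, f ≠ e → x ∉ f :=
        fun f hf hne hmem => hne (hxonly f hf hmem)
      -- pendant-triangle key fact, stated symmetrically in x2/x3
      have hpt : ∀ y z : V, G.Adj x y → G.Adj y z →
          (∀ w, G.Adj y w → w = x ∨ w = z) →
          ∀ c, G.Adj y c → s(y, c) ∈ M → s(y, c) ≠ e → False := by
        intro y z hxy hyz hnb c hyc hfM hne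
        rcases hnb c hyc with rfl | rfl
        · exact hne (hxonly _ hfM (Sym2.mem_iff.mpr (Or.inr rfl)))
        · have hyE : y ∉ e := hMm _ hfM e heM hne y (Sym2.mem_iff.mpr (Or.inl rfl))
          have hgE : s(x, y) ∈ G.edgeSet := (SimpleGraph.mem_edgeSet G).mpr hxy
          have hgM : s(x, y) ∉ M := by
            intro hg
            have hge : s(x, y) = e := hxonly _ hg (Sym2.mem_iff.mpr (Or.inl rfl))
            exact hyE (hge ▸ (Sym2.mem_iff.mpr (Or.inr rfl)))
          refine hMi _ hgE hgM e heM _ hfM ?_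
          intro v hv
          rcases Sym2.mem_iff.mp hv with rfl | rfl
          · exact Or.inl hxe
          · exact Or.inr (Sym2.mem_iff.mpr (Or.inl rfl))
      have hfree2 : ∀ f ∈ M, f ≠ e → x2 ∉ f := by
        intro f hf hne hmem
        obtain ⟨a, b, rfl⟩ := hsplit f
        have hab := (SimpleGraph.mem_edgeSet G).mp (hMe _ hf)
        rcases Sym2.mem_iff.mp hmem with rfl | rfl
        · exact hpt x2 x3 hT12 hT23 hnbr2 b hab hf hne
        · rw [Sym2.eq_swap] at hf hne
          exact hpt x2 x3 hT12 hT23 hnbr2 a hab.symm hf hne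
      have hfree3 : ∀ f ∈ M, f ≠ e → x3 ∉ f := by
        intro f hf hne hmem
        obtain ⟨a, b, rfl⟩ := hsplit f
        have hab := (SimpleGraph.mem_edgeSet G).mp (hMe _ hf)
        rcases Sym2.mem_iff.mp hmem with rfl | rfl
        · exact hpt x3 x2 hT13 hT23.symm hnbr3 b hab hf hne
        · rw [Sym2.eq_swap] at hf hne
          exact hpt x3 x2 hT13 hT23.symm hnbr3 a hab.symm hf hne
      have hnotin : s(x2, x3) ∉ M.erase e := by
        intro h
        exact hfree2 _ (Finset.mem_of_mem_erase h) (Finset.ne_of_mem_erase h)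
          (Sym2.mem_iff.mpr (Or.inl rfl))
      refine ⟨insert s(x2, x3) (M.erase e), ⟨⟨?_, ?_⟩, ?_⟩, ?_⟩
      · -- edges of the new set are edges of G'
        intro e' he'
        rcases Finset.mem_insert.mp he' with rfl | he'
        · exact (hG'edge x2 x3).mpr ⟨hT23, hxx2.symm, hxx3.symm⟩
        · have hfM := Finset.mem_of_mem_erase he'
          have hne := Finset.ne_of_mem_erase he'
          obtain ⟨a, b, rfl⟩ := hsplit e'
          have hab := (SimpleGraph.mem_edgeSet G).mp (hMe _ hfM)
          refine (hG'edge a b).mpr ⟨hab, ?_, ?_⟩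
          · intro h; exact hxfree _ hfM hne (Sym2.mem_iff.mpr (Or.inl h.symm))
          · intro h; exact hxfree _ hfM hne (Sym2.mem_iff.mpr (Or.inr h.symm))
      · -- pairwise disjoint
        intro e₁ he₁ e₂ he₂ hne v hv hv2
        rcases Finset.mem_insert.mp he₁ with rfl | hf₁ <;>
          rcases Finset.mem_insert.mp he₂ with rfl | hf₂
        · exact hne rfl
        · rcases Sym2.mem_iff.mp hv with rfl | rfl
          · exact hfree2 _ (Finset.mem_of_mem_erase hf₂) (Finset.ne_of_mem_erase hf₂) hv2
          · exact hfree3 _ (Finset.mem_of_mem_erase hf₂) (Finset.ne_of_mem_erase hf₂) hv2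
        · rcases Sym2.mem_iff.mp hv2 with rfl | rfl
          · exact hfree2 _ (Finset.mem_of_mem_erase hf₁) (Finset.ne_of_mem_erase hf₁) hv
          · exact hfree3 _ (Finset.mem_of_mem_erase hf₁) (Finset.ne_of_mem_erase hf₁) hv
        · exact hMm _ (Finset.mem_of_mem_erase hf₁) _ (Finset.mem_of_mem_erase hf₂)
            hne v hv hv2
      · -- induced
        intro f hf hfM e₁ he₁ e₂ he₂ hall
        obtain ⟨a, b, rfl⟩ := hsplit f
        obtain ⟨hab, ha, hb⟩ := (hG'edge a b).mp hf
        have hfM' : s(a, b) ∉ M := by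
          intro h
          have hne : s(a, b) ≠ e := by
            intro h'
            rcases Sym2.mem_iff.mp (h' ▸ hxe) with h'' | h''
            · exact ha h''.symm
            · exact hb h''.symm
          exact hfM (Finset.mem_insert_of_mem (Finset.mem_erase.mpr ⟨hne, h⟩))
        have hmix : ∀ e' ∈ M.erase e,
            (∀ v : V, v ∈ s(a, b) → v ∈ s(x2, x3) ∨ v ∈ e') → False := by
          intro e' he' hall'
          rcases hall' a (Sym2.mem_iff.mpr (Or.inl rfl)) with haIn | haIn
          · rcases Sym2.mem_iff.mp haIn with rfl | rfl
            · rcases hnbr2 b hab with h' | h'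
              · exact hb h'
              · apply hfM; rw [h']; exact Finset.mem_insert_self _ _
            · rcases hnbr3 b hab with h' | h'
              · exact hb h'
              · apply hfM; rw [h', Sym2.eq_swap]; exact Finset.mem_insert_self _ _
          · rcases hall' b (Sym2.mem_iff.mpr (Or.inr rfl)) with hbIn | hbIn
            · rcases Sym2.mem_iff.mp hbIn with rfl | rfl
              · rcases hnbr2 a hab.symm with h' | h'
                · exact ha h'
                · apply hfM; rw [h', Sym2.eq_swap]; exact Finset.mem_insert_self _ _
              · rcases hnbr3 a hab.symm with h' | h'
                · exact ha h'
                · apply hfM; rw [h']; exact Finset.mem_insert_self _ _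
            · have he'M := Finset.mem_of_mem_erase he'
              refine hMi _ ((SimpleGraph.mem_edgeSet G).mpr hab) hfM' e' he'M e' he'M ?_
              intro v hv
              rcases Sym2.mem_iff.mp hv with rfl | rfl
              · exact Or.inl haIn
              · exact Or.inl hbIn
        rcases Finset.mem_insert.mp he₁ with rfl | hg₁ <;>
          rcases Finset.mem_insert.mp he₂ with rfl | hg₂
        · have hA : a = x2 ∨ a = x3 :=
            Sym2.mem_iff.mp ((hall a (Sym2.mem_iff.mpr (Or.inl rfl))).elim id id)
          have hB : b = x2 ∨ b = x3 :=
            Sym2.mem_iff.mp ((hall b (Sym2.mem_iff.mpr (Or.inr rfl))).elim id id)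
          apply hfM
          rcases hA with h1 | h1 <;> rcases hB with h2 | h2
          · exact absurd (h1.trans h2.symm) hab.ne
          · rw [h1, h2]; exact Finset.mem_insert_self _ _
          · rw [h1, h2, Sym2.eq_swap]; exact Finset.mem_insert_self _ _
          · exact absurd (h1.trans h2.symm) hab.ne
        · exact hmix e₂ hg₂ hall
        · exact hmix e₁ hg₁ (fun v hv => (hall v hv).symm)
        · exact hMi _ ((SimpleGraph.mem_edgeSet G).mpr hab) hfM' e₁
            (Finset.mem_of_mem_erase hg₁) e₂ (Finset.mem_of_mem_erase hg₂) hall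
      · -- cardinality
        rw [Finset.card_insert_of_notMem hnotin, Finset.card_erase_of_mem heM]
        have h1 : 1 ≤ M.card := Finset.card_pos.mpr ⟨e, heM⟩
        omega
  -- conclude
  unfold CW.indMatchNum
  apply le_antisymm
  · apply csSup_le
    · exact ⟨0, ∅, cw_empty_indmatch G', Finset.card_empty⟩
    · rintro k ⟨M, hM, rfl⟩
      exact le_csSup (cw_bdd G) ⟨M, transfer1 M hM, rfl⟩
  · apply csSup_le
    · exact ⟨0, ∅, cw_empty_indmatch G, Finset.card_empty⟩
    · rintro k ⟨M, hM, rfl⟩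
      obtain ⟨M', hM', hc⟩ := transfer2 M hM
      exact le_csSup (cw_bdd G') ⟨M', hM', hc⟩
end

section
/- Let G be a Cameron-Walker graph and T = {x1, x2, x3} a pendant triangle of G with deg(x2) = deg(x3) = 2. Then G \ {x2, x3} is a Cameron-Walker graph with indmatch(G \ {x2, x3}) = indmatch(G) - 1. -/
open MvPolynomial

section Aux

open CW

variable {V : Type*} [Fintype V] [DecidableEq V]

private lemma cwBdd (P : Finset (Sym2 V) → Prop) :
    BddAbove {k : ℕ | ∃ M : Finset (Sym2 V), P M ∧ M.card = k} :=
  ⟨(Finset.univ : Finset (Sym2 V)).card, fun k hk => by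
    obtain ⟨M, _, hMk⟩ := hk
    exact hMk ▸ Finset.card_le_univ M⟩

private lemma cwEmptyMatching (G : SimpleGraph V) : CW.IsMatching G (∅ : Finset (Sym2 V)) :=
  ⟨fun e he => absurd he (Finset.notMem_empty e),
   fun e he => absurd he (Finset.notMem_empty e)⟩

private lemma cwEmptyInduced (G : SimpleGraph V) :
    CW.IsInducedMatching G (∅ : Finset (Sym2 V)) :=
  ⟨cwEmptyMatching G, fun _ _ _ e he => absurd he (Finset.notMem_empty e)⟩

private lemma cwCardLeMatchNum {G : SimpleGraph V} {M : Finset (Sym2 V)}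
    (h : CW.IsMatching G M) : M.card ≤ CW.matchNum G :=
  le_csSup (cwBdd _) ⟨M, h, rfl⟩

private lemma cwCardLeIndMatchNum {G : SimpleGraph V} {M : Finset (Sym2 V)}
    (h : CW.IsInducedMatching G M) : M.card ≤ CW.indMatchNum G :=
  le_csSup (cwBdd _) ⟨M, h, rfl⟩

private lemma cwMatchNumLe {G : SimpleGraph V} {n : ℕ}
    (h : ∀ M : Finset (Sym2 V), CW.IsMatching G M → M.card ≤ n) : CW.matchNum G ≤ n :=
  csSup_le ⟨0, ∅, cwEmptyMatching G, rfl⟩ (fun k hk => by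
    obtain ⟨M, hM, hMk⟩ := hk; exact hMk ▸ h M hM)

private lemma cwIndLeMatch (G : SimpleGraph V) : CW.indMatchNum G ≤ CW.matchNum G :=
  csSup_le ⟨0, ∅, cwEmptyInduced G, rfl⟩ (fun k hk => by
    obtain ⟨M, hM, hMk⟩ := hk; exact hMk ▸ cwCardLeMatchNum hM.1)

private lemma cwExistsMaxInduced (G : SimpleGraph V) :
    ∃ M : Finset (Sym2 V), CW.IsInducedMatching G M ∧ M.card = CW.indMatchNum G := by
  have h := Nat.sSup_mem (s := {k : ℕ | ∃ M : Finset (Sym2 V),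
      CW.IsInducedMatching G M ∧ M.card = k}) ⟨0, ∅, cwEmptyInduced G, rfl⟩ (cwBdd _)
  obtain ⟨M, hM, hMk⟩ := h
  exact ⟨M, hM, hMk⟩

end Aux
/-- If `G` is Cameron–Walker and `T = {x1, x2, x3}` is a pendant triangle of `G` with
`deg(x2) = deg(x3) = 2`, then `G \ {x2, x3}` is Cameron–Walker and its induced matching
number is `indmatch(G) - 1`. -/
theorem stmt_9 {V : Type*} [Fintype V] [DecidableEq V] (G : SimpleGraph V)
    [DecidableRel G.Adj] (hCW : CW.IsCameronWalker G) (x1 x2 x3 : V)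
    (h12 : G.Adj x1 x2) (h13 : G.Adj x1 x3) (h23 : G.Adj x2 x3)
    (hd2 : G.degree x2 = 2) (hd3 : G.degree x3 = 2) (hd1 : G.degree x1 ≠ 2) :
    CW.IsCameronWalker (CW.deleteVerts G {x2, x3}) ∧
      CW.indMatchNum (CW.deleteVerts G {x2, x3}) = CW.indMatchNum G - 1 := by
  have hne13 : x1 ≠ x3 := h13.ne
  have hne12 : x1 ≠ x2 := h12.ne
  have hne23 : x2 ≠ x3 := h23.ne
  set G' := CW.deleteVerts G {x2, x3} with hG'def
  -- neighbors of x2 are exactly x1 and x3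
  have hnbr2 : ∀ y, G.Adj x2 y → y = x1 ∨ y = x3 := by
    intro y hy
    have hsub : ({x1, x3} : Finset V) ⊆ G.neighborFinset x2 := by
      intro z hz
      rcases Finset.mem_insert.1 hz with rfl | hz
      · exact (G.mem_neighborFinset _ _).2 h12.symm
      · rw [Finset.mem_singleton] at hz
        subst hz
        exact (G.mem_neighborFinset _ _).2 h23
    have hcard : (G.neighborFinset x2).card ≤ ({x1, x3} : Finset V).card := by
      rw [Finset.card_insert_of_notMem (by simpa using hne13), Finset.card_singleton]
      exact le_of_eq hd2
    have heq := Finset.eq_of_subset_of_card_le hsub hcard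
    have hy' : y ∈ G.neighborFinset x2 := (G.mem_neighborFinset _ _).2 hy
    rw [← heq] at hy'
    rcases Finset.mem_insert.1 hy' with rfl | hy'
    · exact Or.inl rfl
    · exact Or.inr (Finset.mem_singleton.1 hy')
  -- neighbors of x3 are exactly x1 and x2
  have hnbr3 : ∀ y, G.Adj x3 y → y = x1 ∨ y = x2 := by
    intro y hy
    have hsub : ({x1, x2} : Finset V) ⊆ G.neighborFinset x3 := by
      intro z hz
      rcases Finset.mem_insert.1 hz with rfl | hz
      · exact (G.mem_neighborFinset _ _).2 h13.symm
      · rw [Finset.mem_singleton] at hz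
        subst hz
        exact (G.mem_neighborFinset _ _).2 h23.symm
    have hcard : (G.neighborFinset x3).card ≤ ({x1, x2} : Finset V).card := by
      rw [Finset.card_insert_of_notMem (by simpa using hne12), Finset.card_singleton]
      exact le_of_eq hd3
    have heq := Finset.eq_of_subset_of_card_le hsub hcard
    have hy' : y ∈ G.neighborFinset x3 := (G.mem_neighborFinset _ _).2 hy
    rw [← heq] at hy'
    rcases Finset.mem_insert.1 hy' with rfl | hy'
    · exact Or.inl rfl
    · exact Or.inr (Finset.mem_singleton.1 hy')
  -- classification of edges touching x2 or x3
  have hclass : ∀ e ∈ G.edgeSet, (x2 ∈ e ∨ x3 ∈ e) →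
      e = s(x1, x2) ∨ e = s(x1, x3) ∨ e = s(x2, x3) := by
    intro e he hmem
    induction e using Sym2.ind with
    | _ a b =>
      rw [SimpleGraph.mem_edgeSet] at he
      simp only [Sym2.mem_iff] at hmem
      rcases hmem with (h | h) | (h | h)
      · subst h
        rcases hnbr2 b he with rfl | rfl
        · exact Or.inl (Sym2.eq_swap)
        · exact Or.inr (Or.inr rfl)
      · subst h
        rcases hnbr2 a he.symm with rfl | rfl
        · exact Or.inl rfl
        · exact Or.inr (Or.inr Sym2.eq_swap)
      · subst h
        rcases hnbr3 b he with rfl | rfl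
        · exact Or.inr (Or.inl Sym2.eq_swap)
        · exact Or.inr (Or.inr Sym2.eq_swap)
      · subst h
        rcases hnbr3 a he.symm with rfl | rfl
        · exact Or.inr (Or.inl rfl)
        · exact Or.inr (Or.inr rfl)
  -- edges of G' are edges of G avoiding x2, x3
  have hG'edge : ∀ e ∈ G'.edgeSet, e ∈ G.edgeSet ∧ x2 ∉ e ∧ x3 ∉ e := by
    intro e he
    induction e using Sym2.ind with
    | _ a b =>
      rw [SimpleGraph.mem_edgeSet] at he
      obtain ⟨hab, ha, hb⟩ := he
      simp only [Set.mem_insert_iff, Set.mem_singleton_iff, not_or] at ha hb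
      refine ⟨hab, ?_, ?_⟩
      · rw [Sym2.mem_iff]
        rintro (h | h)
        · exact ha.1 h.symm
        · exact hb.1 h.symm
      · rw [Sym2.mem_iff]
        rintro (h | h)
        · exact ha.2 h.symm
        · exact hb.2 h.symm
  have hG'edge' : ∀ e ∈ G.edgeSet, x2 ∉ e → x3 ∉ e → e ∈ G'.edgeSet := by
    intro e he h2 h3
    induction e using Sym2.ind with
    | _ a b =>
      rw [SimpleGraph.mem_edgeSet] at he ⊢
      simp only [Sym2.mem_iff, not_or] at h2 h3
      refine ⟨he, ?_, ?_⟩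
      · simp only [Set.mem_insert_iff, Set.mem_singleton_iff, not_or]
        exact ⟨fun h => h2.1 h.symm, fun h => h3.1 h.symm⟩
      · simp only [Set.mem_insert_iff, Set.mem_singleton_iff, not_or]
        exact ⟨fun h => h2.2 h.symm, fun h => h3.2 h.symm⟩
  -- adding s(x2,x3) to a matching of G' gives a matching of G
  have hinsert : ∀ M' : Finset (Sym2 V), CW.IsMatching G' M' →
      CW.IsMatching G (insert s(x2, x3) M') ∧
        (insert s(x2, x3) M').card = M'.card + 1 := by
    intro M' hM'
    have hnot : s(x2, x3) ∉ M' := by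
      intro h
      exact (hG'edge _ (hM'.1 _ h)).2.1 (Sym2.mem_iff.2 (Or.inl rfl))
    refine ⟨⟨?_, ?_⟩, Finset.card_insert_of_notMem hnot⟩
    · intro e he
      rcases Finset.mem_insert.1 he with rfl | he
      · exact G.mem_edgeSet.2 h23
      · exact (hG'edge _ (hM'.1 _ he)).1
    · intro e he f hf hef v hve hvf
      rcases Finset.mem_insert.1 he with rfl | he <;>
        rcases Finset.mem_insert.1 hf with rfl | hf
      · exact hef rfl
      · obtain ⟨_, h2, h3⟩ := hG'edge _ (hM'.1 _ hf)
        rcases Sym2.mem_iff.1 hve with rfl | rfl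
        · exact h2 hvf
        · exact h3 hvf
      · obtain ⟨_, h2, h3⟩ := hG'edge _ (hM'.1 _ he)
        rcases Sym2.mem_iff.1 hvf with rfl | rfl
        · exact h2 hve
        · exact h3 hve
      · exact hM'.2 e he f hf hef v hve hvf
  -- the maximum induced matching of G
  obtain ⟨M, hMind, hMcard⟩ := cwExistsMaxInduced G
  have hk : CW.matchNum G = CW.indMatchNum G := hCW
  -- M contains an edge touching x2 or x3
  have hex : ∃ e ∈ M, x2 ∈ e ∨ x3 ∈ e := by
    by_contra hcon
    push_neg at hcon
    have hnot : s(x2, x3) ∉ M := by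
      intro h
      exact (hcon _ h).1 (Sym2.mem_iff.2 (Or.inl rfl))
    have hM1 : CW.IsMatching G (insert s(x2, x3) M) := by
      refine ⟨?_, ?_⟩
      · intro e he
        rcases Finset.mem_insert.1 he with rfl | he
        · exact G.mem_edgeSet.2 h23
        · exact hMind.1.1 e he
      · intro e he f hf hef v hve hvf
        rcases Finset.mem_insert.1 he with rfl | he <;>
          rcases Finset.mem_insert.1 hf with rfl | hf
        · exact hef rfl
        · rcases Sym2.mem_iff.1 hve with h | h
          · exact (hcon _ hf).1 (h ▸ hvf)
          · exact (hcon _ hf).2 (h ▸ hvf)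
        · rcases Sym2.mem_iff.1 hvf with h | h
          · exact (hcon _ he).1 (h ▸ hve)
          · exact (hcon _ he).2 (h ▸ hve)
        · exact hMind.1.2 e he f hf hef v hve hvf
    have hle := cwCardLeMatchNum hM1
    rw [Finset.card_insert_of_notMem hnot, hMcard, hk] at hle
    omega
  -- any two edges of M touching x2 or x3 coincide
  have huniq : ∀ e ∈ M, ∀ f ∈ M, (x2 ∈ e ∨ x3 ∈ e) → (x2 ∈ f ∨ x3 ∈ f) → e = f := by
    intro e he f hf h1 h2
    by_contra hef
    have he' := hclass e (hMind.1.1 e he) h1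
    have hf' := hclass f (hMind.1.1 f hf) h2
    have hdisj := hMind.1.2 e he f hf hef
    rcases he' with rfl | rfl | rfl <;> rcases hf' with rfl | rfl | rfl
    · exact hef rfl
    · exact hdisj x1 (Sym2.mem_iff.2 (Or.inl rfl)) (Sym2.mem_iff.2 (Or.inl rfl))
    · exact hdisj x2 (Sym2.mem_iff.2 (Or.inr rfl)) (Sym2.mem_iff.2 (Or.inl rfl))
    · exact hdisj x1 (Sym2.mem_iff.2 (Or.inl rfl)) (Sym2.mem_iff.2 (Or.inl rfl))
    · exact hef rfl
    · exact hdisj x3 (Sym2.mem_iff.2 (Or.inr rfl)) (Sym2.mem_iff.2 (Or.inr rfl))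
    · exact hdisj x2 (Sym2.mem_iff.2 (Or.inl rfl)) (Sym2.mem_iff.2 (Or.inr rfl))
    · exact hdisj x3 (Sym2.mem_iff.2 (Or.inr rfl)) (Sym2.mem_iff.2 (Or.inr rfl))
    · exact hef rfl
  obtain ⟨e0, he0M, he0mem⟩ := hex
  -- M minus e0 is an induced matching of G'
  have herase_edge : ∀ f ∈ M.erase e0, f ∈ G'.edgeSet := by
    intro f hf
    obtain ⟨hfe, hfM⟩ := Finset.mem_erase.1 hf
    refine hG'edge' f (hMind.1.1 f hfM) ?_ ?_
    · intro h2f; exact hfe (huniq f hfM e0 he0M (Or.inl h2f) he0mem)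
    · intro h3f; exact hfe (huniq f hfM e0 he0M (Or.inr h3f) he0mem)
  have hind' : CW.IsInducedMatching G' (M.erase e0) := by
    refine ⟨⟨herase_edge, ?_⟩, ?_⟩
    · intro e he f hf
      exact hMind.1.2 e (Finset.mem_erase.1 he).2 f (Finset.mem_erase.1 hf).2
    · intro f hf hfnot e₁ he₁ e₂ he₂
      have hfG := (hG'edge f hf).1
      have hfM : f ∉ M := by
        intro hfM
        have hfe0 : f = e0 := by
          by_contra h
          exact hfnot (Finset.mem_erase.2 ⟨h, hfM⟩)
        subst hfe0
        rcases he0mem with h | h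
        · exact (hG'edge f hf).2.1 h
        · exact (hG'edge f hf).2.2 h
      exact hMind.2 f hfG hfM e₁ (Finset.mem_erase.1 he₁).2 e₂ (Finset.mem_erase.1 he₂).2
  have hge : CW.indMatchNum G - 1 ≤ CW.indMatchNum G' := by
    have h := cwCardLeIndMatchNum hind'
    rwa [Finset.card_erase_of_mem he0M, hMcard] at h
  have hle : CW.matchNum G' ≤ CW.indMatchNum G - 1 := by
    apply cwMatchNumLe
    intro M' hM'
    obtain ⟨hm, hc⟩ := hinsert M' hM'
    have h := cwCardLeMatchNum hm
    rw [hc, hk] at h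
    omega
  have hmono := cwIndLeMatch G'
  have h1 : CW.indMatchNum G' = CW.indMatchNum G - 1 :=
    le_antisymm (hmono.trans hle) hge
  have h2 : CW.matchNum G' = CW.indMatchNum G - 1 :=
    le_antisymm hle (hge.trans hmono)
  exact ⟨h2.trans h1.symm, h1⟩
end

section
/- Let G be a finite simple graph, and let e = x1x2 be a pendant edge of G (i.e., x2 is a leaf whose only neighbor is x1). Then for every integer s ≥ 1, the colon ideal of the s-th symbolic power satisfies (I(G)^(s) : x1·x2) = I(G)^(s-1). -/
open MvPolynomial

section Aux

open Finsupp

variable {V : Type*} [DecidableEq V] (K : Type*) [Field K]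

open Classical in
/-- Weight of an exponent vector: total degree in the variables of `C`. -/
noncomputable def wtC (C : Set V) : (V →₀ ℕ) →+ ℕ :=
  Finsupp.weight (fun v => if v ∈ C then 1 else 0)

open Classical in
lemma wtC_single (C : Set V) (v : V) :
    wtC C (Finsupp.single v 1) = if v ∈ C then 1 else 0 := by
  simp [wtC, Finsupp.weight_apply, Finsupp.sum_single_index]

/-- The ideal of polynomials all of whose monomials have `wtC`-weight at least `s`. -/
noncomputable def degGE (C : Set V) (s : ℕ) : Ideal (MvPolynomial V K) where
  carrier := {f | ∀ m ∈ f.support, s ≤ wtC C m}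
  zero_mem' := by simp
  add_mem' := by
    intro a b ha hb m hm
    rcases Finset.mem_union.mp (MvPolynomial.support_add hm) with h | h
    · exact ha m h
    · exact hb m h
  smul_mem' := by
    intro r f hf m hm
    rw [smul_eq_mul] at hm
    obtain ⟨m1, hm1, m2, hm2, rfl⟩ := Finset.mem_add.mp (MvPolynomial.support_mul _ _ hm)
    have := hf m2 hm2
    rw [map_add]
    omega

lemma mem_degGE {C : Set V} {s : ℕ} {f : MvPolynomial V K} :
    f ∈ degGE K C s ↔ ∀ m ∈ f.support, s ≤ wtC C m := Iff.rfl

lemma degGE_mul_le (C : Set V) (a b : ℕ) :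
    degGE K C a * degGE K C b ≤ degGE K C (a + b) := by
  rw [Ideal.mul_le]
  intro f hf g hg m hm
  obtain ⟨m1, hm1, m2, hm2, rfl⟩ := Finset.mem_add.mp (MvPolynomial.support_mul _ _ hm)
  have h1 := hf m1 hm1
  have h2 := hg m2 hm2
  rw [map_add]
  omega

lemma coverIdeal_le_degGE (C : Set V) : CW.coverIdeal K C ≤ degGE K C 1 := by
  rw [CW.coverIdeal, Ideal.span_le]
  rintro _ ⟨v, hv, rfl⟩
  intro m hm
  rw [MvPolynomial.support_X, Finset.mem_singleton] at hm
  subst hm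
  rw [wtC_single, if_pos hv]

lemma pow_le_degGE (C : Set V) (s : ℕ) : (CW.coverIdeal K C) ^ s ≤ degGE K C s := by
  induction s with
  | zero => intro f _; intro m _; exact Nat.zero_le _
  | succ n ih =>
      calc (CW.coverIdeal K C) ^ (n + 1) = (CW.coverIdeal K C) ^ n * CW.coverIdeal K C := pow_succ _ _
      _ ≤ degGE K C n * degGE K C 1 := Ideal.mul_mono ih (coverIdeal_le_degGE K C)
      _ ≤ degGE K C (n + 1) := degGE_mul_le K C n 1

lemma monomial_mem_pow (C : Set V) (s : ℕ) (m : V →₀ ℕ) (c : K) (h : s ≤ wtC C m) :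
    (MvPolynomial.monomial m c : MvPolynomial V K) ∈ (CW.coverIdeal K C) ^ s := by
  classical
  induction s generalizing m with
  | zero => simp
  | succ n ih =>
      -- find a variable v ∈ C with m v ≥ 1
      have hpos : 0 < wtC C m := lt_of_lt_of_le (Nat.succ_pos n) h
      have : ∃ v, v ∈ C ∧ 1 ≤ m v := by
        by_contra hno
        push_neg at hno
        have : wtC C m = 0 := by
          rw [wtC, Finsupp.weight_apply, Finsupp.sum]
          apply Finset.sum_eq_zero
          intro v hv
          by_cases hvC : v ∈ C
          · have := hno v hvC
            interval_cases h : m v <;> simp_all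
          · simp [hvC]
        omega
      obtain ⟨v, hvC, hv1⟩ := this
      have hle : Finsupp.single v 1 ≤ m := Finsupp.single_le_iff.mpr hv1
      set m' := m - Finsupp.single v 1 with hm'
      have hsum : Finsupp.single v 1 + m' = m := by
        rw [hm', add_comm]
        exact tsub_add_cancel_of_le hle
      have hwt : n ≤ wtC C m' := by
        have : wtC C (Finsupp.single v 1 + m') = wtC C (Finsupp.single v 1) + wtC C m' :=
          map_add _ _ _
        rw [hsum] at this
        rw [wtC_single, if_pos hvC] at this
        omega
      have heq : (MvPolynomial.monomial m c : MvPolynomial V K)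
          = MvPolynomial.X v * MvPolynomial.monomial m' c := by
        rw [← hsum, MvPolynomial.monomial_single_add, pow_one]
      rw [heq, pow_succ']
      exact Ideal.mul_mem_mul (Ideal.subset_span ⟨v, hvC, rfl⟩) (ih m' hwt)
      
lemma degGE_le_pow (C : Set V) (s : ℕ) : degGE K C s ≤ (CW.coverIdeal K C) ^ s := by
  intro f hf
  rw [MvPolynomial.as_sum f]
  apply Ideal.sum_mem
  intro m hm
  exact monomial_mem_pow K C s m _ (hf m hm)


lemma colon_pow_pendant (C : Set V) {a b : V} (ha : a ∈ C) (hb : b ∉ C)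
    {s : ℕ} (hs : 1 ≤ s) :
    ((CW.coverIdeal K C) ^ s).colon (Ideal.span {(MvPolynomial.X a : MvPolynomial V K)
        * MvPolynomial.X b}) = (CW.coverIdeal K C) ^ (s - 1) := by
  ext f
  rw [Ideal.mem_colon_span_singleton]
  constructor
  · intro h
    rw [mul_comm] at h
    apply degGE_le_pow K C (s - 1)
    intro m hm
    have hmem : Finsupp.single a 1 + (Finsupp.single b 1 + m)
        ∈ (MvPolynomial.X a * MvPolynomial.X b * f).support := by
      rw [MvPolynomial.mem_support_iff, mul_assoc, MvPolynomial.coeff_X_mul,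
        MvPolynomial.coeff_X_mul]
      exact MvPolynomial.mem_support_iff.mp hm
    have hw := pow_le_degGE K C s h _ hmem
    rw [map_add, map_add, wtC_single, wtC_single, if_pos ha, if_neg hb] at hw
    omega
  · intro h
    have h1 : MvPolynomial.X a * f ∈ (CW.coverIdeal K C) ^ s := by
      have : MvPolynomial.X a * f ∈ CW.coverIdeal K C * (CW.coverIdeal K C) ^ (s - 1) :=
        Ideal.mul_mem_mul (Ideal.subset_span ⟨a, ha, rfl⟩) h
      rwa [← pow_succ', Nat.sub_add_cancel hs] at this
    have : MvPolynomial.X b * (MvPolynomial.X a * f) ∈ (CW.coverIdeal K C) ^ s :=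
      Ideal.mul_mem_left _ _ h1
    convert this using 1
    ring

lemma colon_iInf {R : Type*} [CommRing R] {ι : Sort*} (J : ι → Ideal R) (I : Ideal R) :
    (⨅ i, J i).colon I = ⨅ i, (J i).colon I := by
  ext x
  simp only [Submodule.mem_colon, Ideal.mem_iInf]
  exact ⟨fun h i p hp => h p hp i, fun h p hp i => h i p hp⟩

lemma minimal_cover_mem {G : SimpleGraph V} [Fintype V] [DecidableRel G.Adj] {x1 x2 : V}
    (hadj : G.Adj x1 x2) (hleaf : G.degree x2 = 1) {C : Set V}
    (hC : CW.IsMinimalVertexCover G C) :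
    (x1 ∈ C ∧ x2 ∉ C) ∨ (x2 ∈ C ∧ x1 ∉ C) := by
  have huniq : ∀ w : V, G.Adj x2 w → w = x1 := by
    intro w hw
    have h1 : x1 ∈ G.neighborFinset x2 := by
      rw [SimpleGraph.mem_neighborFinset]; exact hadj.symm
    have hw1 : w ∈ G.neighborFinset x2 := by
      rw [SimpleGraph.mem_neighborFinset]; exact hw
    obtain ⟨u, hu⟩ := Finset.card_eq_one.mp hleaf
    rw [hu, Finset.mem_singleton] at h1 hw1
    rw [hw1, h1]
  have hnboth : ¬ (x1 ∈ C ∧ x2 ∈ C) := by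
    rintro ⟨h1, h2⟩
    apply hC.2 (C \ {x2})
    · exact Set.sdiff_singleton_ssubset.mpr h2
    · intro v w hvw
      rcases hC.1 hvw with hv | hw
      · by_cases hvx : v = x2
        · subst hvx
          rw [huniq w hvw]
          exact Or.inr ⟨h1, by simp [hadj.ne]⟩
        · exact Or.inl ⟨hv, hvx⟩
      · by_cases hwx : w = x2
        · subst hwx
          rw [huniq v hvw.symm]
          exact Or.inl ⟨h1, by simp [hadj.ne]⟩
        · exact Or.inr ⟨hw, hwx⟩
  rcases hC.1 hadj with h1 | h2
  · exact Or.inl ⟨h1, fun h2 => hnboth ⟨h1, h2⟩⟩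
  · exact Or.inr ⟨h2, fun h1 => hnboth ⟨h1, h2⟩⟩

end Aux

/-- If `x1 x2` is a pendant edge of `G` (`x2` a leaf), then for every `s ≥ 1` we have
`(I(G)^(s) : x1·x2) = I(G)^(s-1)`. -/
theorem stmt_10 {V : Type*} [Fintype V] [DecidableEq V] (K : Type*) [Field K]
    (G : SimpleGraph V) [DecidableRel G.Adj] (x1 x2 : V)
    (hadj : G.Adj x1 x2) (hleaf : G.degree x2 = 1) (s : ℕ) (hs : 1 ≤ s) :
    (CW.symbolicPower K G s).colon
        (Ideal.span {(X x1 : MvPolynomial V K) * X x2})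
      = CW.symbolicPower K G (s - 1) := by
  rw [CW.symbolicPower, CW.symbolicPower, colon_iInf]
  apply iInf_congr
  intro C
  rw [colon_iInf]
  apply iInf_congr
  intro hC
  rcases minimal_cover_mem hadj hleaf hC with ⟨h1, h2⟩ | ⟨h1, h2⟩
  · exact colon_pow_pendant K C h1 h2 hs
  · rw [show (MvPolynomial.X x1 : MvPolynomial V K) * MvPolynomial.X x2
        = MvPolynomial.X x2 * MvPolynomial.X x1 from mul_comm _ _]
    exact colon_pow_pendant K C h1 h2 hs
end

section
/- Let G be a finite simple graph with a pendant triangle T = {x1, x2, x3} where deg(x2) = deg(x3) = 2. Then for every s ≥ 1, the ideal ((I(G)^(s) : x1·x2) + (x3)) equals ((I(G \ x3)^(s) : x1·x2) + (x3)), and consequently (I(G)^(s) : x1·x2) + (x3) = I(G \ x3)^(s-1) + (x3), since x1x2 is a pendant edge of G \ x3. -/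
open MvPolynomial

namespace Stmt17Aux

variable {V : Type*} [Fintype V] {K : Type*} [Field K]

/-- weighted degree of a monomial exponent vector w.r.t. a set of variables -/
noncomputable def wdeg (C : Set V) (d : V →₀ ℕ) : ℕ :=
  ∑ v : V, C.indicator d v

lemma wdeg_add (C : Set V) (d e : V →₀ ℕ) : wdeg C (d + e) = wdeg C d + wdeg C e := by
  classical
  unfold wdeg
  rw [← Finset.sum_add_distrib]
  refine Finset.sum_congr rfl fun v _ => ?_
  by_cases h : v ∈ C <;> simp [Set.indicator_of_mem, Set.indicator_of_notMem, h]

lemma wdeg_single_mem (C : Set V) {v : V} (h : v ∈ C) :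
    wdeg C (Finsupp.single v 1) = 1 := by
  classical
  unfold wdeg
  rw [Finset.sum_eq_single v]
  · simp [Set.indicator_of_mem h]
  · intro u _ hu
    by_cases hc : u ∈ C <;>
      simp [Set.indicator_of_mem, Set.indicator_of_notMem, hc, Finsupp.single_apply, Ne.symm hu]
  · simp
lemma wdeg_single_not_mem (C : Set V) {v : V} (h : v ∉ C) :
    wdeg C (Finsupp.single v 1) = 0 := by
  classical
  unfold wdeg
  refine Finset.sum_eq_zero fun u _ => ?_
  by_cases hc : u ∈ C
  · rw [Set.indicator_of_mem hc]
    rcases eq_or_ne v u with rfl | hne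
    · exact absurd hc h
    · simp [Finsupp.single_apply, hne]
  · rw [Set.indicator_of_notMem hc]

lemma wdeg_mono {C C' : Set V} (h : C ⊆ C') (d : V →₀ ℕ) : wdeg C d ≤ wdeg C' d := by
  classical
  refine Finset.sum_le_sum fun v _ => ?_
  by_cases hc : v ∈ C
  · rw [Set.indicator_of_mem hc, Set.indicator_of_mem (h hc)]
  · rw [Set.indicator_of_notMem hc]; exact Nat.zero_le _

lemma wdeg_congr {C C' : Set V} {d : V →₀ ℕ}
    (h : ∀ v, d v ≠ 0 → (v ∈ C ↔ v ∈ C')) : wdeg C d = wdeg C' d := by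
  classical
  refine Finset.sum_congr rfl fun v _ => ?_
  by_cases hd : d v = 0
  · by_cases hc : v ∈ C <;> by_cases hc' : v ∈ C' <;>
      simp [Set.indicator_of_mem, Set.indicator_of_notMem, hc, hc', hd]
  · have := h v hd
    by_cases hc : v ∈ C
    · rw [Set.indicator_of_mem hc, Set.indicator_of_mem (this.1 hc)]
    · rw [Set.indicator_of_notMem hc, Set.indicator_of_notMem (fun hh => hc (this.2 hh))]

lemma exists_of_wdeg_pos {C : Set V} {d : V →₀ ℕ} (h : 0 < wdeg C d) :
    ∃ v ∈ C, d v ≠ 0 := by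
  classical
  by_contra hc
  push_neg at hc
  have : wdeg C d = 0 := by
    refine Finset.sum_eq_zero fun v _ => ?_
    by_cases hv : v ∈ C
    · rw [Set.indicator_of_mem hv, hc v hv]
    · exact Set.indicator_of_notMem hv _
  omega

/-- membership in powers of the cover ideal -/
lemma mem_pow_coverIdeal (C : Set V) (k : ℕ) (f : MvPolynomial V K) :
    f ∈ (CW.coverIdeal K C) ^ k ↔ ∀ d ∈ f.support, k ≤ wdeg C d := by
  classical
  constructor
  · -- forward: induction on k
    intro hf
    induction k generalizing f with
    | zero => intro d _; exact Nat.zero_le _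
    | succ k ih =>
      rw [pow_succ] at hf
      refine Submodule.smul_induction_on hf ?_ ?_
      · intro p hp q hq d hd
        have hd' := support_mul p q hd
        rw [Finset.mem_add] at hd'
        obtain ⟨a, ha, b, hb, rfl⟩ := hd'
        have h1 : k ≤ wdeg C a := ih p hp a ha
        have h2 : 1 ≤ wdeg C b := by
          -- q ∈ coverIdeal C: show every monomial of q has wdeg ≥ 1
          have : ∀ r ∈ CW.coverIdeal K C, ∀ e ∈ MvPolynomial.support r, 1 ≤ wdeg C e := by
            intro r hr
            refine Submodule.span_induction ?_ ?_ ?_ ?_ hr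
            · rintro _ ⟨v, hv, rfl⟩ e he
              rw [support_X, Finset.mem_singleton] at he
              subst he
              rw [wdeg_single_mem C hv]
            · intro e he; simp at he
            · intro p' q' _ _ hp' hq' e he
              rcases Finset.mem_union.1 (MvPolynomial.support_add he) with h | h
              · exact hp' e h
              · exact hq' e h
            · intro r p' _ hp' e he
              have := support_mul r p' he
              rw [Finset.mem_add] at this
              obtain ⟨a', _, b', hb', rfl⟩ := this
              calc 1 ≤ wdeg C b' := hp' b' hb'
                _ ≤ wdeg C (a' + b') := by rw [wdeg_add]; omega
          exact this q hq b hb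
        rw [wdeg_add]; omega
      · intro p q hp hq d hd
        rcases Finset.mem_union.1 (MvPolynomial.support_add hd) with h | h
        · exact hp d h
        · exact hq d h
  · -- backward
    intro hf
    have key : ∀ (k : ℕ) (d : V →₀ ℕ) (c : K), k ≤ wdeg C d →
        (monomial d c : MvPolynomial V K) ∈ (CW.coverIdeal K C) ^ k := by
      intro k
      induction k with
      | zero => intro d c _; simp
      | succ k ih =>
        intro d c hk
        obtain ⟨v, hv, hdv⟩ := exists_of_wdeg_pos (C := C) (d := d) (by omega)
        have hdec : Finsupp.single v 1 + (d - Finsupp.single v 1) = d := by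
          ext u
          rcases eq_or_ne v u with rfl | hne
          · simp only [Finsupp.coe_add, Pi.add_apply, Finsupp.tsub_apply,
              Finsupp.single_eq_same]
            omega
          · simp [Finsupp.single_apply, hne]
        have hw : k ≤ wdeg C (d - Finsupp.single v 1) := by
          have := wdeg_add C (Finsupp.single v 1) (d - Finsupp.single v 1)
          rw [hdec, wdeg_single_mem C hv] at this
          omega
        have heq : (monomial d c : MvPolynomial V K) =
            monomial (d - Finsupp.single v 1) c * X v := by
          have hd2 : d = (d - Finsupp.single v 1) + Finsupp.single v 1 := by
            rw [add_comm]; exact hdec.symm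
          rw [X, monomial_mul, mul_one, ← hd2]
        rw [heq, pow_succ]
        exact Ideal.mul_mem_mul (ih _ c hw)
          (Ideal.subset_span ⟨v, hv, rfl⟩)
    have hf' : f = ∑ d ∈ f.support, monomial d (coeff d f) :=
      (support_sum_monomial_coeff f).symm
    rw [hf']
    exact Ideal.sum_mem _ fun d hd => key k d _ (hf d hd)

lemma mem_symb (G : SimpleGraph V) (s : ℕ) (f : MvPolynomial V K) :
    f ∈ CW.symbolicPower K G s ↔
      ∀ C : Set V, CW.IsMinimalVertexCover G C → ∀ d ∈ f.support, s ≤ wdeg C d := by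
  unfold CW.symbolicPower
  simp only [Submodule.mem_iInf, Set.mem_setOf_eq]
  constructor
  · intro h C hC
    exact (mem_pow_coverIdeal C s f).1 (h C hC)
  · intro h C hC
    exact (mem_pow_coverIdeal C s f).2 (h C hC)

/-- the part of `f` whose monomials do not involve `x3` -/
noncomputable def trunc (x3 : V) (f : MvPolynomial V K) : MvPolynomial V K :=
  ∑ d ∈ f.support.filter (fun d => d x3 = 0), monomial d (coeff d f)

lemma coeff_trunc (x3 : V) (f : MvPolynomial V K) (d : V →₀ ℕ) :
    coeff d (trunc x3 f) = if d x3 = 0 then coeff d f else 0 := by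
  classical
  unfold trunc
  rw [coeff_sum]
  simp only [coeff_monomial]
  rw [Finset.sum_ite_eq' (f.support.filter (fun d => d x3 = 0)) d (fun e => coeff e f)]
  by_cases h1 : d x3 = 0
  · by_cases h2 : d ∈ f.support
    · simp [Finset.mem_filter, h1, h2]
    · simp [Finset.mem_filter, h1, h2, MvPolynomial.notMem_support_iff.1 h2]
  · simp [Finset.mem_filter, h1]

lemma support_trunc {x3 : V} {f : MvPolynomial V K} {d : V →₀ ℕ}
    (h : d ∈ (trunc x3 f).support) : d ∈ f.support ∧ d x3 = 0 := by
  rw [MvPolynomial.mem_support_iff, coeff_trunc] at h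
  by_cases h1 : d x3 = 0
  · exact ⟨MvPolynomial.mem_support_iff.2 (by simpa [h1] using h), h1⟩
  · simp [h1] at h

lemma sub_trunc_mem (x3 : V) (f : MvPolynomial V K) :
    f - trunc x3 f ∈ Ideal.span {(X x3 : MvPolynomial V K)} := by
  classical
  have hsplit : f - trunc x3 f =
      ∑ d ∈ f.support.filter (fun d => ¬ d x3 = 0), monomial d (coeff d f) := by
    have := Finset.sum_filter_add_sum_filter_not f.support (fun d => d x3 = 0)
      (fun d => (monomial d (coeff d f) : MvPolynomial V K))
    rw [support_sum_monomial_coeff f] at this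
    unfold trunc
    linear_combination -this
  rw [hsplit]
  refine Ideal.sum_mem _ fun d hd => ?_
  have hdx : d x3 ≠ 0 := (Finset.mem_filter.1 hd).2
  rw [Ideal.mem_span_singleton]
  refine ⟨monomial (d - Finsupp.single x3 1) (coeff d f), ?_⟩
  have hdec : Finsupp.single x3 1 + (d - Finsupp.single x3 1) = d := by
    ext u
    rcases eq_or_ne x3 u with rfl | hne
    · simp only [Finsupp.coe_add, Pi.add_apply, Finsupp.tsub_apply, Finsupp.single_eq_same]
      omega
    · simp [Finsupp.single_apply, hne]
  rw [X, monomial_mul, one_mul, hdec]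

lemma forall_support_mul_monomial (g : MvPolynomial V K) (a : V →₀ ℕ)
    (P : (V →₀ ℕ) → Prop) :
    (∀ d ∈ (g * monomial a (1 : K)).support, P d) ↔ ∀ d ∈ g.support, P (d + a) := by
  classical
  constructor
  · intro h d hd
    refine h (d + a) ?_
    rw [MvPolynomial.mem_support_iff, coeff_mul_monomial, mul_one]
    exact MvPolynomial.mem_support_iff.1 hd
  · intro h d' hd'
    rw [MvPolynomial.mem_support_iff, coeff_mul_monomial'] at hd'
    by_cases hle : a ≤ d'
    · have hc : coeff (d' - a) g ≠ 0 := by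
        intro hz; rw [if_pos hle, hz] at hd'; simp at hd'
      have := h (d' - a) (MvPolynomial.mem_support_iff.2 hc)
      rwa [tsub_add_cancel_of_le hle] at this
    · rw [if_neg hle] at hd'; simp at hd'

/-- colon characterization -/
lemma mem_colon_symb (G : SimpleGraph V) (s : ℕ) (x1 x2 : V) (g : MvPolynomial V K) :
    g ∈ (CW.symbolicPower K G s).colon
        (Ideal.span {(X x1 : MvPolynomial V K) * X x2}) ↔
      ∀ C : Set V, CW.IsMinimalVertexCover G C → ∀ d ∈ g.support,
        s ≤ wdeg C d + wdeg C (Finsupp.single x1 1 + Finsupp.single x2 1) := by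
  set a : V →₀ ℕ := Finsupp.single x1 1 + Finsupp.single x2 1 with ha
  have hXX : (X x1 : MvPolynomial V K) * X x2 = monomial a 1 := by
    rw [X, X, monomial_mul, one_mul]
  rw [Ideal.mem_colon_span_singleton, hXX, mem_symb]
  constructor
  · intro h C hC
    have := (forall_support_mul_monomial g a (fun d => s ≤ wdeg C d)).1 (h C hC)
    intro d hd
    have h2 := this d hd
    rwa [wdeg_add] at h2
  · intro h C hC
    refine (forall_support_mul_monomial g a (fun d => s ≤ wdeg C d)).2 ?_
    intro d hd
    rw [wdeg_add]
    exact h C hC d hd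

/-- every vertex cover contains a minimal one -/
lemma exists_min_subcover (G : SimpleGraph V) :
    ∀ (n : ℕ) (C : Set V), C.ncard ≤ n → CW.IsVertexCover G C →
      ∃ C', C' ⊆ C ∧ CW.IsMinimalVertexCover G C' := by
  intro n
  induction n with
  | zero =>
    intro C hc hcov
    refine ⟨C, subset_rfl, hcov, fun D hD _ => ?_⟩
    have hC0 : C = ∅ := (Set.ncard_eq_zero (Set.toFinite C)).1 (Nat.le_zero.1 hc)
    rw [hC0] at hD
    exact absurd (Set.subset_empty_iff.1 hD.subset)
      fun h => hD.2 (by simp [h])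
  | succ n ih =>
    intro C hc hcov
    by_cases hmin : ∀ D : Set V, D ⊂ C → ¬ CW.IsVertexCover G D
    · exact ⟨C, subset_rfl, hcov, hmin⟩
    · push_neg at hmin
      obtain ⟨D, hD, hDcov⟩ := hmin
      have hlt : D.ncard < C.ncard := Set.ncard_lt_ncard hD (Set.toFinite C)
      obtain ⟨C', hC'1, hC'2⟩ := ih D (by omega) hDcov
      exact ⟨C', hC'1.trans hD.subset, hC'2⟩

end Stmt17Aux

/-- If `T = {x1, x2, x3}` is a pendant triangle of `G` with `deg(x2) = deg(x3) = 2`,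
then for every `s ≥ 1`,
`(I(G)^(s) : x1·x2) + (x3) = (I(G \ x3)^(s) : x1·x2) + (x3)`, and consequently
`(I(G)^(s) : x1·x2) + (x3) = I(G \ x3)^(s-1) + (x3)`. -/
theorem stmt_17 {V : Type*} [Fintype V] [DecidableEq V] (K : Type*) [Field K]
    (G : SimpleGraph V) [DecidableRel G.Adj] (x1 x2 x3 : V)
    (h12 : G.Adj x1 x2) (h13 : G.Adj x1 x3) (h23 : G.Adj x2 x3)
    (hd2 : G.degree x2 = 2) (hd3 : G.degree x3 = 2) (hd1 : G.degree x1 ≠ 2)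
    (s : ℕ) (hs : 1 ≤ s) :
    (CW.symbolicPower K G s).colon
          (Ideal.span {(X x1 : MvPolynomial V K) * X x2})
        ⊔ Ideal.span {(X x3 : MvPolynomial V K)}
      = (CW.symbolicPower K (CW.deleteVerts G {x3}) s).colon
            (Ideal.span {(X x1 : MvPolynomial V K) * X x2})
          ⊔ Ideal.span {(X x3 : MvPolynomial V K)} ∧
    (CW.symbolicPower K G s).colon
          (Ideal.span {(X x1 : MvPolynomial V K) * X x2})
        ⊔ Ideal.span {(X x3 : MvPolynomial V K)}
      = CW.symbolicPower K (CW.deleteVerts G {x3}) (s - 1)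
          ⊔ Ideal.span {(X x3 : MvPolynomial V K)} := by
  classical
  open Stmt17Aux in
  set H : SimpleGraph V := CW.deleteVerts G {x3} with hHdef
  have ne12 : x1 ≠ x2 := h12.ne
  have ne13 : x1 ≠ x3 := h13.ne
  have ne23 : x2 ≠ x3 := h23.ne
  have hHadj : ∀ v w, H.Adj v w ↔ G.Adj v w ∧ v ≠ x3 ∧ w ≠ x3 := by
    intro v w
    show (G.Adj v w ∧ v ∉ ({x3} : Set V) ∧ w ∉ ({x3} : Set V)) ↔ _
    simp [Set.mem_singleton_iff]
  -- neighbor characterizations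
  have hnbr : ∀ (y a b : V), a ≠ b → G.Adj y a → G.Adj y b → G.degree y = 2 →
      ∀ v, G.Adj y v → v = a ∨ v = b := by
    intro y a b hab hya hyb hdeg v hv
    have hsub : ({a, b} : Finset V) ⊆ G.neighborFinset y := by
      intro u hu
      rcases Finset.mem_insert.1 hu with rfl | hu
      · exact (SimpleGraph.mem_neighborFinset _ _ _).2 hya
      · rw [Finset.mem_singleton] at hu
        subst hu
        exact (SimpleGraph.mem_neighborFinset _ _ _).2 hyb
    have hcard : ({a, b} : Finset V).card = 2 := by
      rw [Finset.card_insert_of_notMem (by simp [hab]), Finset.card_singleton]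
    have heq : ({a, b} : Finset V) = G.neighborFinset y := by
      refine Finset.eq_of_subset_of_card_le hsub ?_
      rw [hcard, SimpleGraph.card_neighborFinset_eq_degree, hdeg]
    have hvmem : v ∈ G.neighborFinset y := (SimpleGraph.mem_neighborFinset _ _ _).2 hv
    rw [← heq] at hvmem
    simpa using hvmem
  have hn2 : ∀ v, G.Adj x2 v → v = x1 ∨ v = x3 :=
    hnbr x2 x1 x3 ne13 h12.symm h23 hd2
  have hn3 : ∀ v, G.Adj x3 v → v = x1 ∨ v = x2 :=
    hnbr x3 x1 x2 ne12 h13.symm h23.symm hd3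
  -- minimal covers of H never contain x3
  have hHx3 : ∀ C : Set V, CW.IsMinimalVertexCover H C → x3 ∉ C := by
    rintro C ⟨hcov, hmin⟩ hx3
    refine hmin (C \ {x3}) (Set.sdiff_singleton_ssubset.2 hx3) ?_
    intro v w hvw
    rw [hHadj] at hvw
    rcases hcov ((hHadj v w).2 hvw) with h | h
    · exact Or.inl ⟨h, hvw.2.1⟩
    · exact Or.inr ⟨h, hvw.2.2⟩
  -- minimal covers of H contain exactly one of x1, x2
  have hHone : ∀ C : Set V, CW.IsMinimalVertexCover H C →
      (x1 ∈ C ∧ x2 ∉ C) ∨ (x2 ∈ C ∧ x1 ∉ C) := by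
    rintro C ⟨hcov, hmin⟩
    have hadj12 : H.Adj x1 x2 := (hHadj x1 x2).2 ⟨h12, ne13, ne23⟩
    have hor := hcov hadj12
    by_cases h1 : x1 ∈ C <;> by_cases h2 : x2 ∈ C
    · -- both: contradiction with minimality (remove x2)
      exfalso
      refine hmin (C \ {x2}) (Set.sdiff_singleton_ssubset.2 h2) ?_
      intro v w hvw
      have hG := (hHadj v w).1 hvw
      rcases hcov hvw with h | h
      · rcases eq_or_ne v x2 with rfl | hne
        · -- v = x2 : the other endpoint is x1
          have hw : w = x1 := by
            rcases hn2 w hG.1 with h' | h'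
            · exact h'
            · exact absurd h' hG.2.2
          exact Or.inr ⟨hw ▸ h1, hw ▸ ne12⟩
        · exact Or.inl ⟨h, hne⟩
      · rcases eq_or_ne w x2 with rfl | hne
        · have hv : v = x1 := by
            rcases hn2 v hG.1.symm with h' | h'
            · exact h'
            · exact absurd h' hG.2.1
          exact Or.inl ⟨hv ▸ h1, hv ▸ ne12⟩
        · exact Or.inr ⟨h, hne⟩
    · exact Or.inl ⟨h1, h2⟩
    · exact Or.inr ⟨h2, h1⟩
    · rcases hor with h | h
      · exact absurd h h1
      · exact absurd h h2
  -- minimal cover of G containing x3 gives a minimal cover of H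
  have hG3 : ∀ C : Set V, CW.IsMinimalVertexCover G C → x3 ∈ C →
      CW.IsMinimalVertexCover H (C \ {x3}) := by
    rintro C ⟨hcov, hmin⟩ hx3
    constructor
    · intro v w hvw
      rw [hHadj] at hvw
      rcases hcov hvw.1 with h | h
      · exact Or.inl ⟨h, hvw.2.1⟩
      · exact Or.inr ⟨h, hvw.2.2⟩
    · intro D hD hDcov
      refine hmin (D ∪ {x3}) ?_ ?_
      · constructor
        · intro u hu
          rcases (Set.mem_union _ _ _).1 hu with hu | hu
          · exact (hD.subset hu).1
          · rw [Set.mem_singleton_iff] at hu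
            exact hu ▸ hx3
        · intro hsub
          obtain ⟨a, haC, haD⟩ := Set.exists_of_ssubset hD
          have hax3 : a ∉ ({x3} : Set V) := haC.2
          exact haD (((Set.mem_union _ _ _).1 (hsub haC.1)).resolve_right hax3)
      · intro v w hvw
        rcases eq_or_ne v x3 with rfl | hv3
        · exact Or.inl (Or.inr rfl)
        rcases eq_or_ne w x3 with rfl | hw3
        · exact Or.inr (Or.inr rfl)
        rcases hDcov ((hHadj v w).2 ⟨hvw, hv3, hw3⟩) with h | h
        · exact Or.inl (Or.inl h)
        · exact Or.inr (Or.inl h)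
  -- minimal cover of H gives a minimal cover of G (adding x3)
  have hH3 : ∀ C : Set V, CW.IsMinimalVertexCover H C →
      CW.IsMinimalVertexCover G (insert x3 C) := by
    intro C hC
    obtain ⟨hcov, hmin⟩ := hC
    have hx3C : x3 ∉ C := hHx3 C ⟨hcov, hmin⟩
    constructor
    · intro v w hvw
      rcases eq_or_ne v x3 with rfl | hv3
      · exact Or.inl (Set.mem_insert _ _)
      rcases eq_or_ne w x3 with rfl | hw3
      · exact Or.inr (Set.mem_insert _ _)
      rcases hcov ((hHadj v w).2 ⟨hvw, hv3, hw3⟩) with h | h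
      · exact Or.inl (Set.mem_insert_of_mem _ h)
      · exact Or.inr (Set.mem_insert_of_mem _ h)
    · intro D hD hDcov
      by_cases hx3D : x3 ∈ D
      · refine hmin (D \ {x3}) ?_ ?_
        · constructor
          · intro u hu
            rcases hD.subset hu.1 with h | h
            · exact absurd h hu.2
            · exact h
          · intro hsub
            obtain ⟨a, haC, haD⟩ := Set.exists_of_ssubset hD
            rcases haC with rfl | haC
            · exact haD hx3D
            · exact haD (hsub haC).1
        · intro v w hvw
          rw [hHadj] at hvw
          rcases hDcov hvw.1 with h | h
          · exact Or.inl ⟨h, hvw.2.1⟩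
          · exact Or.inr ⟨h, hvw.2.2⟩
      · -- x3 ∉ D : then x1, x2 ∈ D and D ⊆ C, contradiction
        have hx1D : x1 ∈ D := (hDcov h13).resolve_right hx3D
        have hx2D : x2 ∈ D := (hDcov h23).resolve_right hx3D
        have hDC : D ⊆ C := by
          intro u hu
          rcases hD.subset hu with rfl | h
          · exact absurd hu hx3D
          · exact h
        have hDcovH : CW.IsVertexCover H D := by
          intro v w hvw
          exact hDcov ((hHadj v w).1 hvw).1
        rcases eq_or_ne D C with rfl | hne
        · rcases hHone D ⟨hcov, hmin⟩ with ⟨_, h2⟩ | ⟨_, h1⟩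
          · exact h2 hx2D
          · exact h1 hx1D
        · exact hmin D (Set.ssubset_iff_subset_ne.2 ⟨hDC, hne⟩) hDcovH
  -- minimal cover of G avoiding x3
  have hGno3 : ∀ C : Set V, CW.IsMinimalVertexCover G C → x3 ∉ C →
      x1 ∈ C ∧ x2 ∈ C ∧ CW.IsVertexCover H C := by
    rintro C ⟨hcov, hmin⟩ hx3
    refine ⟨(hcov h13).resolve_right hx3, (hcov h23).resolve_right hx3, ?_⟩
    intro v w hvw
    exact hcov ((hHadj v w).1 hvw).1
  -- abbreviations
  set a : V →₀ ℕ := Finsupp.single x1 1 + Finsupp.single x2 1 with hadef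
  have ha3 : a x3 = 0 := by
    simp [hadef, Finsupp.single_apply, ne13, ne23, Ne.symm ne13, Ne.symm ne23]
  have hwa : ∀ C : Set V, CW.IsMinimalVertexCover H C → wdeg C a = 1 := by
    intro C hC
    rcases hHone C hC with ⟨h1, h2⟩ | ⟨h2, h1⟩
    · rw [hadef, wdeg_add, wdeg_single_mem C h1, wdeg_single_not_mem C h2]
    · rw [hadef, wdeg_add, wdeg_single_not_mem C h1, wdeg_single_mem C h2]
  -- key transfer lemmas
  have keyLR : ∀ g ∈ (CW.symbolicPower K G s).colon
      (Ideal.span {(X x1 : MvPolynomial V K) * X x2}),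
      trunc x3 g ∈ (CW.symbolicPower K H s).colon
      (Ideal.span {(X x1 : MvPolynomial V K) * X x2}) := by
    intro g hg
    rw [mem_colon_symb] at hg ⊢
    intro C' hC' d hd
    obtain ⟨hdg, hdx3⟩ := support_trunc hd
    have hins := hH3 C' hC'
    have hG := hg (insert x3 C') hins d hdg
    have e1 : wdeg (insert x3 C') d = wdeg C' d := by
      refine wdeg_congr fun v hv => ?_
      have hv3 : v ≠ x3 := fun h => hv (h ▸ hdx3)
      simp [Set.mem_insert_iff, hv3]
    have e2 : wdeg (insert x3 C') a = wdeg C' a := by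
      refine wdeg_congr fun v hv => ?_
      have hv3 : v ≠ x3 := fun h => hv (h ▸ ha3)
      simp [Set.mem_insert_iff, hv3]
    rw [e1, e2] at hG
    exact hG
  have keyRL : ∀ g ∈ (CW.symbolicPower K H s).colon
      (Ideal.span {(X x1 : MvPolynomial V K) * X x2}),
      trunc x3 g ∈ (CW.symbolicPower K G s).colon
      (Ideal.span {(X x1 : MvPolynomial V K) * X x2}) := by
    intro g hg
    rw [mem_colon_symb] at hg ⊢
    intro C hC d hd
    obtain ⟨hdg, hdx3⟩ := support_trunc hd
    by_cases hx3 : x3 ∈ C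
    · have hC' := hG3 C hC hx3
      have hH := hg (C \ {x3}) hC' d hdg
      have e1 : wdeg (C \ {x3}) d = wdeg C d := by
        refine wdeg_congr fun v hv => ?_
        have hv3 : v ≠ x3 := fun h => hv (h ▸ hdx3)
        simp [Set.mem_diff, hv3]
      have e2 : wdeg (C \ {x3}) a = wdeg C a := by
        refine wdeg_congr fun v hv => ?_
        have hv3 : v ≠ x3 := fun h => hv (h ▸ ha3)
        simp [Set.mem_diff, hv3]
      rw [e1, e2] at hH
      exact hH
    · obtain ⟨hx1, hx2, hVC⟩ := hGno3 C hC hx3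
      obtain ⟨C'', hsub, hC''⟩ := exists_min_subcover H (Fintype.card V) C
        (by
          have h1 : C.ncard ≤ (Set.univ : Set V).ncard :=
            Set.ncard_le_ncard (Set.subset_univ C) (Set.toFinite _)
          simpa [Set.ncard_univ, Nat.card_eq_fintype_card] using h1) hVC
      have hH := hg C'' hC'' d hdg
      calc s ≤ wdeg C'' d + wdeg C'' a := hH
        _ ≤ wdeg C d + wdeg C a := add_le_add (wdeg_mono hsub d) (wdeg_mono hsub a)
  -- pendant edge colon computation
  have pend : (CW.symbolicPower K H s).colon
      (Ideal.span {(X x1 : MvPolynomial V K) * X x2}) =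
      CW.symbolicPower K H (s - 1) := by
    ext g
    rw [mem_colon_symb, mem_symb]
    constructor
    · intro h C hC d hd
      have := h C hC d hd
      rw [hwa C hC] at this
      omega
    · intro h C hC d hd
      have := h C hC d hd
      rw [hwa C hC]
      omega
  have eq1 : (CW.symbolicPower K G s).colon
        (Ideal.span {(X x1 : MvPolynomial V K) * X x2})
      ⊔ Ideal.span {(X x3 : MvPolynomial V K)}
    = (CW.symbolicPower K H s).colon
        (Ideal.span {(X x1 : MvPolynomial V K) * X x2})
      ⊔ Ideal.span {(X x3 : MvPolynomial V K)} := by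
    apply le_antisymm
    · refine sup_le (fun g hg => ?_) le_sup_right
      have hsplit : g = trunc x3 g + (g - trunc x3 g) := by ring
      rw [hsplit]
      exact Submodule.add_mem _ (Submodule.mem_sup_left (keyLR g hg))
        (Submodule.mem_sup_right (sub_trunc_mem x3 g))
    · refine sup_le (fun g hg => ?_) le_sup_right
      have hsplit : g = trunc x3 g + (g - trunc x3 g) := by ring
      rw [hsplit]
      exact Submodule.add_mem _ (Submodule.mem_sup_left (keyRL g hg))
        (Submodule.mem_sup_right (sub_trunc_mem x3 g))
  exact ⟨eq1, eq1.trans (by rw [pend])⟩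
end
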